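/- For every ρ > 0, the relaxed bound B̄(ρ) = 16·Q(√(8ρ)) + 4∑_{k=2}^∞ (2k+1)·Q(k√(8ρ)) satisfies B̄(ρ) ≤ (1/(2√(πρ)))·(8 e^{-4ρ} + 5 e^{-16ρ}/(1 - e^{-20ρ})). -/

import Mathlib

open Real

noncomputable def gaussQ (x : ℝ) : ℝ :=
  ∫ t in Set.Ioi x, (1 / Real.sqrt (2 * Real.pi)) * Real.exp (-t ^ 2 / 2)

lemma gaussQ_nonneg (x : ℝ) : 0 ≤ gaussQ x := by
  apply MeasureTheory.setIntegral_nonneg measurableSet_Ioi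
  intro t _
  positivity

lemma integrableOn_exp_tail (x : ℝ) :
    MeasureTheory.IntegrableOn (fun t : ℝ => Real.exp (-t ^ 2 / 2)) (Set.Ioi x) := by
  have h := (integrable_exp_neg_mul_sq (by norm_num : (0:ℝ) < 1/2)).integrableOn
    (s := Set.Ioi x)
  have he : (fun t : ℝ => Real.exp (-(1/2) * t ^ 2)) = fun t : ℝ => Real.exp (-t ^ 2 / 2) := by
    funext t; congr 1; ring
  rwa [he] at h

lemma integrableOn_mul_exp_tail (x : ℝ) :
    MeasureTheory.IntegrableOn (fun t : ℝ => t * Real.exp (-t ^ 2 / 2)) (Set.Ioi x) := by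
  have h := (integrable_mul_exp_neg_mul_sq (by norm_num : (0:ℝ) < 1/2)).integrableOn
    (s := Set.Ioi x)
  have he : (fun t : ℝ => t * Real.exp (-(1/2) * t ^ 2))
      = fun t : ℝ => t * Real.exp (-t ^ 2 / 2) := by
    funext t; congr 2; ring
  rwa [he] at h

lemma integral_mul_exp_tail (x : ℝ) :
    ∫ t in Set.Ioi x, t * Real.exp (-t ^ 2 / 2) = Real.exp (-x ^ 2 / 2) := by
  have hderiv : ∀ t ∈ Set.Ici x, HasDerivAt (fun u : ℝ => -Real.exp (-u ^ 2 / 2))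
      (t * Real.exp (-t ^ 2 / 2)) t := by
    intro t _
    have h1 : HasDerivAt (fun u : ℝ => -u ^ 2 / 2) (-t) t := by
      have h := (hasDerivAt_pow 2 t).const_mul (-(1/2) : ℝ)
      have he : (fun u : ℝ => -(1/2) * u ^ 2) = fun u : ℝ => -u ^ 2 / 2 := by
        funext u; ring
      rw [he] at h
      refine h.congr_deriv ?_
      push_cast; ring
    have h2 := h1.exp.neg
    exact h2.congr_deriv (by ring)
  have htend : Filter.Tendsto (fun u : ℝ => -Real.exp (-u ^ 2 / 2)) Filter.atTop (nhds 0) := by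
    rw [show (0:ℝ) = -0 by ring]
    apply Filter.Tendsto.neg
    apply Real.tendsto_exp_atBot.comp
    have h := (Filter.tendsto_pow_atTop (two_ne_zero)).const_mul_atTop_of_neg
      (show (-(1/2) : ℝ) < 0 by norm_num)
    have he : (fun u : ℝ => -(1/2) * u ^ 2) = fun u : ℝ => -u ^ 2 / 2 := by
      funext u; ring
    rwa [he] at h
  have := MeasureTheory.integral_Ioi_of_hasDerivAt_of_tendsto' hderiv
    (integrableOn_mul_exp_tail x) htend
  rw [this]; ring

lemma gaussQ_le {x : ℝ} (hx : 0 < x) :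
    gaussQ x ≤ Real.exp (-x ^ 2 / 2) / (Real.sqrt (2 * Real.pi) * x) := by
  have hc : 0 < Real.sqrt (2 * Real.pi) := Real.sqrt_pos.2 (by positivity)
  have hmono : ∫ t in Set.Ioi x, Real.exp (-t ^ 2 / 2)
      ≤ ∫ t in Set.Ioi x, (1 / x) * (t * Real.exp (-t ^ 2 / 2)) := by
    apply MeasureTheory.setIntegral_mono_on (integrableOn_exp_tail x)
      ((integrableOn_mul_exp_tail x).const_mul (1 / x)) measurableSet_Ioi
    intro t ht
    have h1 : (1:ℝ) ≤ t / x := (one_le_div hx).2 (le_of_lt ht)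
    have h2 : (1 / x) * (t * Real.exp (-t ^ 2 / 2)) = (t / x) * Real.exp (-t ^ 2 / 2) := by
      ring
    rw [h2]
    nlinarith [Real.exp_pos (-t ^ 2 / 2)]
  have hval : ∫ t in Set.Ioi x, (1 / x) * (t * Real.exp (-t ^ 2 / 2))
      = Real.exp (-x ^ 2 / 2) / x := by
    rw [MeasureTheory.integral_const_mul, integral_mul_exp_tail]
    ring
  have hQ : gaussQ x = (1 / Real.sqrt (2 * Real.pi)) * ∫ t in Set.Ioi x,
      Real.exp (-t ^ 2 / 2) := by
    rw [gaussQ, MeasureTheory.integral_const_mul]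
  rw [hQ]
  rw [hval] at hmono
  have hrw : Real.exp (-x ^ 2 / 2) / (Real.sqrt (2 * Real.pi) * x)
      = (1 / Real.sqrt (2 * Real.pi)) * (Real.exp (-x ^ 2 / 2) / x) := by
    field_simp
  rw [hrw]
  exact mul_le_mul_of_nonneg_left hmono (by positivity)

theorem Bbar_relaxed_bound (ρ : ℝ) (hρ : 0 < ρ) :
    16 * gaussQ (Real.sqrt (8 * ρ)) +
        4 * ∑' k : ℕ, (2 * ((k : ℝ) + 2) + 1) * gaussQ (((k : ℝ) + 2) * Real.sqrt (8 * ρ)) ≤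
      (1 / (2 * Real.sqrt (Real.pi * ρ))) *
        (8 * Real.exp (-4 * ρ) + 5 * Real.exp (-16 * ρ) / (1 - Real.exp (-20 * ρ))) := by
  set S := Real.sqrt (Real.pi * ρ) with hS
  have hS0 : 0 < S := Real.sqrt_pos.2 (by positivity)
  set s := Real.sqrt (8 * ρ) with hsdef
  have hs0 : 0 < s := Real.sqrt_pos.2 (by linarith)
  have hs2 : s ^ 2 = 8 * ρ := Real.sq_sqrt (by linarith)
  have hprod : Real.sqrt (2 * Real.pi) * s = 4 * S := by
    rw [hsdef, hS, ← Real.sqrt_mul (by positivity),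
      show (2 * Real.pi) * (8 * ρ) = 4 ^ 2 * (Real.pi * ρ) by ring,
      Real.sqrt_mul (by norm_num), Real.sqrt_sq (by norm_num)]
  have hr1 : Real.exp (-20 * ρ) < 1 := Real.exp_lt_one_iff.2 (by linarith)
  have hr0 : 0 < Real.exp (-20 * ρ) := Real.exp_pos _
  have h1mr : 0 < 1 - Real.exp (-20 * ρ) := by linarith
  -- first term
  have hb1 : 16 * gaussQ s ≤ (1 / (2 * S)) * (8 * Real.exp (-4 * ρ)) := by
    have h := gaussQ_le hs0
    rw [hprod, show -s ^ 2 / 2 = -4 * ρ by rw [hs2]; ring] at h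
    have heq : (1 / (2 * S)) * (8 * Real.exp (-4 * ρ))
        = 16 * (Real.exp (-4 * ρ) / (4 * S)) := by
      field_simp
      ring
    rw [heq]
    linarith
  -- termwise bound for the series
  have hterm : ∀ k : ℕ, (2 * ((k : ℝ) + 2) + 1) * gaussQ (((k : ℝ) + 2) * s) ≤
      (5 / (8 * S)) * Real.exp (-16 * ρ) * (Real.exp (-20 * ρ)) ^ k := by
    intro k
    have hk0 : (0:ℝ) < (k : ℝ) + 2 := by positivity
    have hx : 0 < ((k : ℝ) + 2) * s := by positivity
    have hQ := gaussQ_le hx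
    have hd : Real.sqrt (2 * Real.pi) * (((k : ℝ) + 2) * s)
        = ((k : ℝ) + 2) * (4 * S) := by
      rw [show Real.sqrt (2 * Real.pi) * (((k : ℝ) + 2) * s)
        = ((k : ℝ) + 2) * (Real.sqrt (2 * Real.pi) * s) by ring, hprod]
    have hesq : -(((k : ℝ) + 2) * s) ^ 2 / 2 = -(4 * ρ * ((k : ℝ) + 2) ^ 2) := by
      rw [mul_pow, hs2]; ring
    rw [hd, hesq] at hQ
    have hE : Real.exp (-(4 * ρ * ((k : ℝ) + 2) ^ 2))
        ≤ Real.exp (-16 * ρ) * (Real.exp (-20 * ρ)) ^ k := by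
      rw [← Real.exp_nat_mul, ← Real.exp_add]
      apply Real.exp_le_exp.2
      have hk : (k : ℝ) ≤ (k : ℝ) ^ 2 := by
        exact_mod_cast Nat.le_self_pow two_ne_zero k
      nlinarith [mul_nonneg hρ.le (sub_nonneg.2 hk)]
    have hcoef : (2 * ((k : ℝ) + 2) + 1) / (((k : ℝ) + 2) * (4 * S)) ≤ 5 / (8 * S) := by
      rw [div_le_div_iff₀ (by positivity) (by positivity)]
      nlinarith [hS0, Nat.cast_nonneg (α := ℝ) k]
    calc (2 * ((k : ℝ) + 2) + 1) * gaussQ (((k : ℝ) + 2) * s)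
        ≤ (2 * ((k : ℝ) + 2) + 1) *
          (Real.exp (-(4 * ρ * ((k : ℝ) + 2) ^ 2)) / (((k : ℝ) + 2) * (4 * S))) :=
          mul_le_mul_of_nonneg_left hQ (by positivity)
      _ = Real.exp (-(4 * ρ * ((k : ℝ) + 2) ^ 2)) *
          ((2 * ((k : ℝ) + 2) + 1) / (((k : ℝ) + 2) * (4 * S))) := by ring
      _ ≤ (Real.exp (-16 * ρ) * (Real.exp (-20 * ρ)) ^ k) * (5 / (8 * S)) := by
          apply mul_le_mul hE hcoef (by positivity) (by positivity)
      _ = (5 / (8 * S)) * Real.exp (-16 * ρ) * (Real.exp (-20 * ρ)) ^ k := by ring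
  have hsumR : Summable (fun k : ℕ =>
      (5 / (8 * S)) * Real.exp (-16 * ρ) * (Real.exp (-20 * ρ)) ^ k) :=
    (summable_geometric_of_lt_one hr0.le hr1).mul_left _
  have hsumL : Summable (fun k : ℕ =>
      (2 * ((k : ℝ) + 2) + 1) * gaussQ (((k : ℝ) + 2) * s)) := by
    apply Summable.of_nonneg_of_le _ hterm hsumR
    intro k
    have := gaussQ_nonneg (((k : ℝ) + 2) * s)
    positivity
  have htsum : (∑' k : ℕ, (2 * ((k : ℝ) + 2) + 1) * gaussQ (((k : ℝ) + 2) * s))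
      ≤ (5 / (8 * S)) * Real.exp (-16 * ρ) * (1 - Real.exp (-20 * ρ))⁻¹ := by
    calc (∑' k : ℕ, (2 * ((k : ℝ) + 2) + 1) * gaussQ (((k : ℝ) + 2) * s))
        ≤ ∑' k : ℕ, (5 / (8 * S)) * Real.exp (-16 * ρ) * (Real.exp (-20 * ρ)) ^ k :=
          Summable.tsum_le_tsum hterm hsumL hsumR
      _ = (5 / (8 * S)) * Real.exp (-16 * ρ) * (1 - Real.exp (-20 * ρ))⁻¹ := by
          rw [tsum_mul_left, tsum_geometric_of_lt_one hr0.le hr1]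
  have hb2 : 4 * (∑' k : ℕ, (2 * ((k : ℝ) + 2) + 1) * gaussQ (((k : ℝ) + 2) * s))
      ≤ (1 / (2 * S)) * (5 * Real.exp (-16 * ρ) / (1 - Real.exp (-20 * ρ))) := by
    have heq : (1 / (2 * S)) * (5 * Real.exp (-16 * ρ) / (1 - Real.exp (-20 * ρ)))
        = 4 * ((5 / (8 * S)) * Real.exp (-16 * ρ) * (1 - Real.exp (-20 * ρ))⁻¹) := by
      simp only [div_eq_mul_inv, mul_inv]
      ring
    rw [heq]
    linarith
  calc 16 * gaussQ s + 4 * ∑' k : ℕ, (2 * ((k : ℝ) + 2) + 1) * gaussQ (((k : ℝ) + 2) * s)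
      ≤ (1 / (2 * S)) * (8 * Real.exp (-4 * ρ))
        + (1 / (2 * S)) * (5 * Real.exp (-16 * ρ) / (1 - Real.exp (-20 * ρ))) := by
        linarith
    _ = (1 / (2 * S)) *
        (8 * Real.exp (-4 * ρ) + 5 * Real.exp (-16 * ρ) / (1 - Real.exp (-20 * ρ))) := by
        ring
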